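/- arXiv:1703.08703 — 2 statements merged into one kernel-verified Lean document; each statement's English description precedes it below -/
import Mathlib

section
/- Let (ξ_n) be a sequence of critical portraits of degree d that Hausdorff-converges to a critical portrait ξ. If m_n denotes the primitive major induced by ξ_n and m the primitive major induced by ξ, then md(m_n, m) → 0, i.e. the majors (m_n) converge to m in Thurston's metric on PM(d). -/
/-!
Common definitions for the formalization of
"Core entropy of polynomials of arbitrary degree" (Gao–Tiozzo).
-/

open Set Metric Filter Topology

attribute [local instance] Classical.propDecidable

noncomputable section

namespace CoreEntropy

/-- The circle `ℝ/ℤ`. -/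
abbrev Circ : Type := AddCircle (1 : ℝ)

/-- The angle `d`-tupling map `θ ↦ d·θ (mod 1)`. -/
def tau (d : ℕ) (θ : Circ) : Circ := d • θ

/-- The embedding of `ℝ/ℤ` into `ℂ` as the unit circle, `θ ↦ e^{2πiθ}`. -/
def pt (θ : Circ) : ℂ := (AddCircle.toCircle θ : ℂ)

/-- The convex hull, inside the closed unit disk, of a finite set of circle points. -/
def hull (ℓ : Finset Circ) : Set ℂ := convexHull ℝ (pt '' (ℓ : Set Circ))

/-- The closed unit disk. -/
def disk : Set ℂ := Metric.closedBall 0 1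

/-- `ℓ` separates the circle points `x` and `y`: they lie in different connected
components of the complement (in the closed unit disk) of the convex hull of `ℓ`. -/
def Separates (ℓ : Finset Circ) (x y : Circ) : Prop :=
  pt x ∈ disk \ hull ℓ ∧ pt y ∈ disk \ hull ℓ ∧
    connectedComponentIn (disk \ hull ℓ) (pt x) ≠ connectedComponentIn (disk \ hull ℓ) (pt y)

/-- A finite collection of finite subsets of the circle. -/
structure Collection where
  s : ℕ
  leaf : Fin s → Finset Circ

/-- `ξ` is a critical portrait of degree `d`. -/
structure IsPortrait (d : ℕ) (ξ : Collection) : Prop where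
  inj : Function.Injective ξ.leaf
  two_le : ∀ k, 2 ≤ (ξ.leaf k).card
  touch : ∀ k l, k ≠ l →
    hull (ξ.leaf k) ∩ hull (ξ.leaf l) = ∅ ∨
      ∃ θ : Circ, hull (ξ.leaf k) ∩ hull (ξ.leaf l) = {pt θ}
  tauConst : ∀ k, ∀ x ∈ ξ.leaf k, ∀ y ∈ ξ.leaf k, tau d x = tau d y
  degree : (∑ k, ((ξ.leaf k).card - 1)) = d - 1

/-- `m` is a primitive major of degree `d`: a critical portrait whose elements have
pairwise disjoint convex hulls. -/
def IsPrimitiveMajor (d : ℕ) (m : Collection) : Prop :=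
  IsPortrait d m ∧ ∀ k l, k ≠ l → Disjoint (hull (m.leaf k)) (hull (m.leaf l))

/-- Two circle points are identified when collapsing each element of `m` to a point. -/
def Collapses (m : Collection) (u v : Circ) : Prop :=
  u = v ∨ ∃ k, u ∈ m.leaf k ∧ v ∈ m.leaf k

/-- The pseudometric `met m` on the circle: the quotient of the arc-length metric of the
circle by the identifications collapsing each element of `m` to a point (infimum of sums of
arc-lengths over chains linked by collapsed pairs). -/
def met (m : Collection) (x y : Circ) : ℝ :=
  sInf { r : ℝ | ∃ n : ℕ, ∃ p q : ℕ → Circ, p 0 = x ∧ q n = y ∧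
    (∀ i < n, Collapses m (q i) (p (i + 1))) ∧
    r = ∑ i ∈ Finset.range (n + 1), dist (p i) (q i) }

/-- Thurston's metric on primitive majors. -/
def md (m m' : Collection) : ℝ :=
  ⨆ x : Circ, ⨆ y : Circ, |met m x y - met m' x y|

/-- Parametrization of the chord from `pt x` to `pt y`. -/
def chord (x y : Circ) (t : ℝ) : ℂ := (1 - t) • pt x + t • pt y

/-- The first parameter at which the chord from `x` to `y` crosses the hull of `ℓ`. -/
def sepKey (ℓ : Finset Circ) (x y : Circ) : ℝ :=
  sInf {t : ℝ | t ∈ Icc (0 : ℝ) 1 ∧ chord x y t ∈ hull ℓ}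

/-- The separation vector of the ordered pair `(x, y)` with respect to `ξ`: the list of
indices of elements of `ξ` separating `x` from `y`, ordered by the crossing order of the
chord from `x` to `y`. -/
def sepList (ξ : Collection) (x y : Circ) : List (Fin ξ.s) :=
  ((Finset.univ.filter fun α => Separates (ξ.leaf α) x y).toList).mergeSort
    (fun α β => decide (sepKey (ξ.leaf α) x y ≤ sepKey (ξ.leaf β) x y))

/-- A chosen vertex of the leaf `ξ.leaf k`. -/
def base (ξ : Collection) (k : Fin ξ.s) : Circ :=
  if h : (ξ.leaf k).Nonempty then h.choose else 0

/-- `x_k(i) = τ^i(ℓ_k)`, the `i`-th forward iterate of the `k`-th leaf (well defined for a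
portrait since `τ` is constant on each leaf). -/
def xpt (d : ℕ) (ξ : Collection) (k : Fin ξ.s) (i : ℕ+) : Circ :=
  (tau d)^[(i : ℕ)] (base ξ k)

/-!  ### Wedges, labeled wedges and their graphs -/

/-- The formal symbols `y_k(i)`, `k ∈ {1,…,s}`, `i ≥ 1`. -/
abbrev Sym (s : ℕ) : Type := Fin s × ℕ+

/-- The wedge of size `s`: unordered pairs of formal symbols. -/
abbrev Vtx (s : ℕ) : Type := Sym2 (Sym s)

/-- A labeled wedge of size `s`: each ordered pair of symbols gets a label, which is either
`∅` (the empty list) or a list of pairwise distinct elements of `{1,…,s}`. -/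
structure LabeledWedge (s : ℕ) where
  label : Sym s → Sym s → List (Fin s)
  nodup : ∀ a b, (label a b).Nodup

/-- Encoding of symbols used to pick a canonical ordered representative of a vertex. -/
def skey {s : ℕ} (p : Sym s) : ℕ := (p.2 : ℕ) * s + (p.1 : ℕ)

lemma skey_injective {s : ℕ} : Function.Injective (skey (s := s)) := by
  rintro ⟨k, i⟩ ⟨l, j⟩ h
  simp only [skey] at h
  have hk : (k : ℕ) < s := k.isLt
  have hl : (l : ℕ) < s := l.isLt
  have h1 : (k : ℕ) = l := by
    have e1 : ((i : ℕ) * s + k) % s = k := by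
      rw [Nat.mul_comm, Nat.mul_add_mod]; exact Nat.mod_eq_of_lt hk
    have e2 : ((j : ℕ) * s + l) % s = l := by
      rw [Nat.mul_comm, Nat.mul_add_mod]; exact Nat.mod_eq_of_lt hl
    rw [← e1, ← e2, h]
  have h2 : (i : ℕ) = (j : ℕ) := by
    have hs : 0 < s := k.pos
    have h3 : (i : ℕ) * s = (j : ℕ) * s := by omega
    exact Nat.eq_of_mul_eq_mul_right hs h3
  exact Prod.ext (Fin.ext h1) (PNat.coe_injective h2)

/-- Canonically ordered pair from an unordered pair. -/
def pick {s : ℕ} (a b : Sym s) : Sym s × Sym s := if skey a ≤ skey b then (a, b) else (b, a)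

lemma pick_comm {s : ℕ} (a b : Sym s) : pick a b = pick b a := by
  unfold pick
  rcases lt_trichotomy (skey a) (skey b) with h | h | h
  · rw [if_pos h.le, if_neg (not_le.mpr h)]
  · have hab : a = b := skey_injective h
    subst hab; simp
  · rw [if_neg (not_le.mpr h), if_pos h.le]

/-- A canonical ordered representative of a vertex of the wedge. -/
def ordRep {s : ℕ} (v : Vtx s) : Sym s × Sym s :=
  Sym2.lift ⟨pick, pick_comm⟩ v

/-- The height `min{i,j}` of the vertex `{y_k(i), y_l(j)}`. -/
def vheight {s : ℕ} (v : Vtx s) : ℕ := min ((ordRep v).1.2 : ℕ) ((ordRep v).2.2 : ℕ)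

/-- The width `max{i,j}` of the vertex `{y_k(i), y_l(j)}`. -/
def vwidth {s : ℕ} (v : Vtx s) : ℕ := max ((ordRep v).1.2 : ℕ) ((ordRep v).2.2 : ℕ)

/-- `y_k(i) ↦ y_k(i+1)`. -/
def succSym {s : ℕ} (p : Sym s) : Sym s := (p.1, p.2 + 1)

/-- The central targets `{y_{α_i}(1), y_{α_{i+1}}(1)}` associated to a label. -/
def centrals {s : ℕ} (L : List (Fin s)) : List (Vtx s) :=
  (L.zip L.tail).map fun q => Sym2.mk (q.1, (1 : ℕ+)) (q.2, (1 : ℕ+))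

/-- The list of targets of the outgoing edges of the vertex with ordered representative
`(a, b)`, in the graph associated to the labeled wedge `W`:
a single upward edge if the label is `∅`, and the `r+1` edges
`{y_k(i+1), y_{α_1}(1)}, {y_{α_1}(1), y_{α_2}(1)}, …, {y_{α_r}(1), y_l(j+1)}`
if the label is `(α_1, …, α_r)`. -/
def targets {s : ℕ} (W : LabeledWedge s) (a b : Sym s) : List (Vtx s) :=
  if h : W.label a b = [] then [Sym2.mk (succSym a) (succSym b)]
  else
    (Sym2.mk (succSym a) ((W.label a b).head h, (1 : ℕ+)) ::
        centrals (W.label a b)) ++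
      [Sym2.mk ((W.label a b).getLast h, (1 : ℕ+)) (succSym b)]

/-- The number of edges from `v` to `w` in the graph associated to a labeled wedge. -/
def numEdges {s : ℕ} (W : LabeledWedge s) (v w : Vtx s) : ℕ :=
  (targets W (ordRep v).1 (ordRep v).2).count w

/-- A directed (multi-)graph: a vertex type together with the number of edges between any
ordered pair of vertices. -/
structure Digraph' where
  V : Type
  E : V → V → ℕ

/-- The graph associated to a labeled wedge. -/
def wedgeGraph {s : ℕ} (W : LabeledWedge s) : Digraph' where
  V := Vtx s
  E := numEdges W

/-- Cyclic successor in `Fin n`. -/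
def cyc {n : ℕ} (i : Fin n) : Fin n := ⟨((i : ℕ) + 1) % n, Nat.mod_lt _ i.pos⟩

/-- The type of closed paths of length `n` in a directed graph: a cyclic sequence of `n`
vertices together with a choice of an edge for each step.  (Closed paths based at different
vertices are different.) -/
def ClosedPaths (G : Digraph') (n : ℕ) : Type :=
  (v : Fin n → G.V) × ((i : Fin n) → Fin (G.E (v i) (v (cyc i))))

/-- `C(Γ, n)`, the number of closed paths of length `n`. -/
def pathCount (G : Digraph') (n : ℕ) : ℕ := Nat.card (ClosedPaths G n)

/-- The growth rate `r(Γ) = limsup C(Γ,n)^{1/n}`. -/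
def growth (G : Digraph') : ℝ :=
  Filter.limsup (fun n : ℕ => (pathCount G n : ℝ) ^ (1 / (n : ℝ))) Filter.atTop

/-- The circle point represented by a formal symbol: `y_k(i) ↦ x_k(i)`. -/
def vpt (d : ℕ) (ξ : Collection) (p : Sym ξ.s) : Circ := xpt d ξ p.1 p.2

/-- The labeled wedge induced by a critical portrait: the ordered pair `(y_k(i), y_l(j))`
is labeled by the separation vector of `(x_k(i), x_l(j))` with respect to `ξ`. -/
def inducedWedge (d : ℕ) (ξ : Collection) : LabeledWedge ξ.s where
  label a b := sepList ξ (vpt d ξ a) (vpt d ξ b)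
  nodup a b := by
    have h1 : (Finset.univ.filter fun α =>
        Separates (ξ.leaf α) (vpt d ξ a) (vpt d ξ b)).toList.Nodup := Finset.nodup_toList _
    exact ((List.mergeSort_perm _ _).nodup_iff).mpr h1

/-- `r(ξ)`, the growth rate of the graph associated to the labeled wedge induced by `ξ`. -/
def growthRate (d : ℕ) (ξ : Collection) : ℝ := growth (wedgeGraph (inducedWedge d ξ))

/-- A vertex is diagonal with respect to `ξ` if its two symbols represent the same circle
point. -/
def Diag (d : ℕ) (ξ : Collection) (v : Vtx ξ.s) : Prop :=
  Sym2.IsDiag (Sym2.map (vpt d ξ) v)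

/-- The set of non-diagonal vertices. -/
def NDSet (d : ℕ) (ξ : Collection) : Set (Vtx ξ.s) := {v | ¬ Diag d ξ v}

/-- The equivalence `≡_ξ` on vertices: they represent the same unordered pair of circle
points. -/
def wEquiv (d : ℕ) (ξ : Collection) (v w : Vtx ξ.s) : Prop :=
  Sym2.map (vpt d ξ) v = Sym2.map (vpt d ξ) w

/-- Restriction of a graph to a set of vertices. -/
def restrict (G : Digraph') (S : Set G.V) : Digraph' where
  V := ↥S
  E v w := G.E v.val w.val

/-- The subgraph `Γ^{ND}` on non-diagonal vertices. -/
def ndGraph (d : ℕ) (ξ : Collection) (W : LabeledWedge ξ.s) : Digraph' :=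
  restrict (wedgeGraph W) (NDSet d ξ)

/-- The setoid `≡_ξ` on non-diagonal vertices. -/
def ndSetoid (d : ℕ) (ξ : Collection) : Setoid ↥(NDSet d ξ) where
  r v w := wEquiv d ξ v.val w.val
  iseqv := ⟨fun _ => rfl, fun h => h.symm, fun h h' => h.trans h'⟩

/-- The quotient graph `Γ^Q = Γ^{ND}/≡_ξ`. -/
def quotGraph (d : ℕ) (ξ : Collection) (W : LabeledWedge ξ.s) : Digraph' where
  V := Quotient (ndSetoid d ξ)
  E c c' := ∑ᶠ u ∈ {u : ↥(NDSet d ξ) | Quotient.mk (ndSetoid d ξ) u = c'},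
      (ndGraph d ξ W).E (Quotient.out c) u

/-- A weak cover of graphs: surjective on vertices and a bijection on outgoing edges. -/
structure IsWeakCover (G₁ G₂ : Digraph') (π : G₁.V → G₂.V) : Prop where
  surj : Function.Surjective π
  edges : ∀ v w', G₂.E (π v) w' = ∑ᶠ w ∈ {w | π w = w'}, G₁.E v w

/-- A labeled wedge is weakly periodic of type `ξ`. -/
def WeaklyPeriodic (d : ℕ) (ξ : Collection) (W : LabeledWedge ξ.s) : Prop :=
  (∀ a b : Sym ξ.s, ∃ B C : List (Fin ξ.s),
      W.label a b = B ++ sepList ξ (vpt d ξ a) (vpt d ξ b) ++ C ∧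
      (∀ β ∈ B, vpt d ξ a ∈ ξ.leaf β) ∧ (∀ γ ∈ C, vpt d ξ b ∈ ξ.leaf γ)) ∧
  (∀ a b b' : Sym ξ.s, vpt d ξ b = vpt d ξ b' →
      ∃ B C C' : List (Fin ξ.s),
        W.label a b = B ++ sepList ξ (vpt d ξ a) (vpt d ξ b) ++ C ∧
        W.label a b' = B ++ sepList ξ (vpt d ξ a) (vpt d ξ b') ++ C' ∧
        (∀ β ∈ B, vpt d ξ a ∈ ξ.leaf β) ∧
        (∀ γ ∈ C, vpt d ξ b ∈ ξ.leaf γ) ∧ (∀ γ ∈ C', vpt d ξ b' ∈ ξ.leaf γ)) ∧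
  (∀ a a' b : Sym ξ.s, vpt d ξ a = vpt d ξ a' →
      ∃ B B' C : List (Fin ξ.s),
        W.label a b = B ++ sepList ξ (vpt d ξ a) (vpt d ξ b) ++ C ∧
        W.label a' b = B' ++ sepList ξ (vpt d ξ a') (vpt d ξ b) ++ C ∧
        (∀ γ ∈ C, vpt d ξ b ∈ ξ.leaf γ) ∧
        (∀ β ∈ B, vpt d ξ a ∈ ξ.leaf β) ∧ (∀ β ∈ B', vpt d ξ a' ∈ ξ.leaf β))

/-- Hausdorff convergence of a sequence of collections to `ξ`, with the matching of leaves
given by the bijections `e n`. -/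
def HConvWith (ξn : ℕ → Collection) (ξ : Collection) (N₀ : ℕ)
    (e : (n : ℕ) → N₀ ≤ n → (Fin (ξn n).s ≃ Fin ξ.s)) : Prop :=
  ∀ k : Fin ξ.s, ∀ ε > (0 : ℝ), ∃ M : ℕ, ∀ n, ∀ hn : N₀ ≤ n, M ≤ n →
    Metric.hausdorffDist (hull ((ξn n).leaf ((e n hn).symm k))) (hull (ξ.leaf k)) < ε

/-- Hausdorff convergence of a sequence of collections. -/
def HConv (ξn : ℕ → Collection) (ξ : Collection) : Prop :=
  ∃ N₀ e, HConvWith ξn ξ N₀ e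

/-- Two leaves touch if their hulls intersect. -/
def touchRel (ξ : Collection) (k l : Fin ξ.s) : Prop :=
  (hull (ξ.leaf k) ∩ hull (ξ.leaf l)).Nonempty

/-- `m` is the primitive major induced by `ξ`: its leaves are the unions of the vertex
sets of the classes of the equivalence generated by intersection of hulls. -/
def InducesMajor (ξ m : Collection) : Prop :=
  ∃ c : Fin ξ.s → Fin m.s, Function.Surjective c ∧
    (∀ k l, c k = c l ↔ Relation.EqvGen (touchRel ξ) k l) ∧
    ∀ t : Fin m.s, m.leaf t = (Finset.univ.filter fun k => c k = t).biUnion ξ.leaf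

/-- The equivalence relation induced by a critical portrait on the circle. -/
def circRel (ξ : Collection) : Circ → Circ → Prop :=
  Relation.EqvGen fun x y => ∃ k, x ∈ ξ.leaf k ∧ y ∈ ξ.leaf k

/-- Relabeling of a labeled wedge along a bijection of `{1,…,s}`. -/
def LabeledWedge.permute {s s' : ℕ} (σ : Fin s ≃ Fin s') (W : LabeledWedge s) :
    LabeledWedge s' where
  label a b := (W.label (σ.symm a.1, a.2) (σ.symm b.1, b.2)).map σ
  nodup a b := (W.nodup _ _).map σ.injective

/-- Convergence of a sequence of labeled wedges defined for `n ≥ N₀`. -/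
def WedgeTendstoFrom {s : ℕ} (N₀ : ℕ) (Wn : (n : ℕ) → N₀ ≤ n → LabeledWedge s)
    (W : LabeledWedge s) : Prop :=
  ∀ S : Finset (Sym s × Sym s), ∃ M : ℕ, ∀ n, ∀ hn : N₀ ≤ n, M ≤ n →
    ∀ p ∈ S, (Wn n hn).label p.1 p.2 = W.label p.1 p.2

/-- Convergence of a sequence of labeled wedges: on each finite set of vertices the labels
are eventually those of the limit. -/
def WedgeTendsto {s : ℕ} (Wn : ℕ → LabeledWedge s) (W : LabeledWedge s) : Prop :=
  ∀ S : Finset (Sym s × Sym s), ∃ M : ℕ, ∀ n, M ≤ n →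
    ∀ p ∈ S, (Wn n).label p.1 p.2 = W.label p.1 p.2

/-- A rational circle point. -/
def RatPoint (θ : Circ) : Prop := ∃ q : ℚ, θ = ((q : ℝ) : Circ)

/-- A rational collection: all angles of all leaves are rational. -/
def IsRational (ξ : Collection) : Prop := ∀ k, ∀ θ ∈ ξ.leaf k, RatPoint θ

/-! ### Thurston's entropy algorithm -/

/-- The postcritical set `P(ξ) = {x_k(i) : k, i ≥ 1}`. -/
def Pset (d : ℕ) (ξ : Collection) : Set Circ := {θ | ∃ k i, θ = xpt d ξ k i}

/-- The set `O_ξ` of unordered pairs of distinct points of `P(ξ)` (or the single pair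
`{x,x}` if `P(ξ) = {x}`). -/
def OSet (d : ℕ) (ξ : Collection) : Set (Sym2 Circ) :=
  {p | ∃ x y, x ∈ Pset d ξ ∧ y ∈ Pset d ξ ∧ p = Sym2.mk x y ∧
        (x ≠ y ∨ ∀ z ∈ Pset d ξ, z = x)}

/-- Basis vector of the free vector space on `O_ξ` (zero if the pair is not in `O_ξ`). -/
def sngl (d : ℕ) (ξ : Collection) (p : Sym2 Circ) : ↥(OSet d ξ) →₀ ℝ :=
  if h : p ∈ OSet d ξ then Finsupp.single ⟨p, h⟩ 1 else 0

/-- The chain `τ(x), τ(ℓ_{α_1}), …, τ(ℓ_{α_r}), τ(y)` associated to a pair `(x,y)` with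
separation vector `(α_1, …, α_r)`. -/
def chainList (d : ℕ) (ξ : Collection) (x y : Circ) : List Circ :=
  (tau d x :: (sepList ξ x y).map fun α => xpt d ξ α 1) ++ [tau d y]

/-- The image of the basis vector `{x,y}` under Thurston's transition operator. -/
def algImage (d : ℕ) (ξ : Collection) (x y : Circ) : ↥(OSet d ξ) →₀ ℝ :=
  if ∃ k, x ∈ ξ.leaf k ∧ y ∈ ξ.leaf k then 0
  else (((chainList d ξ x y).zip (chainList d ξ x y).tail).map
      fun q => sngl d ξ (Sym2.mk q.1 q.2)).sum

/-- Thurston's transition operator `A_ξ` on the free vector space with basis `O_ξ`. -/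
def AxiEnd (d : ℕ) (ξ : Collection) : Module.End ℝ (↥(OSet d ξ) →₀ ℝ) :=
  Finsupp.lift (↥(OSet d ξ) →₀ ℝ) ℝ ↥(OSet d ξ)
    (fun p => algImage d ξ (Quot.out p.val).1 (Quot.out p.val).2)

/-- The leading nonnegative eigenvalue `ρ(ξ)` of `A_ξ`. -/
def rho (d : ℕ) (ξ : Collection) : ℝ :=
  sSup {t : ℝ | 0 ≤ t ∧ Module.End.HasEigenvalue (AxiEnd d ξ) t}

/-- The core entropy `h(ξ) = log ρ(ξ)` given by Thurston's algorithm. -/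
def coreEntropy (d : ℕ) (ξ : Collection) : ℝ := Real.log (rho d ξ)

/-! ### Multicycles and the spectral determinant -/

/-- An edge instance of a multigraph: a pair of vertices together with the index of one of
the edges between them. -/
def EdgeInst (G : Digraph') : Type := {e : G.V × G.V × ℕ // e.2.2 < G.E e.1 e.2.1}

/-- Source of an edge. -/
def esrc {G : Digraph'} (e : EdgeInst G) : G.V := e.val.1

/-- Target of an edge. -/
def etgt {G : Digraph'} (e : EdgeInst G) : G.V := e.val.2.1

/-- A finite edge set is a (simple) multicycle iff every vertex has at most one outgoing
and at most one incoming edge in it, and the sets of sources and targets agree: such a set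
is exactly a disjoint union of simple cycles. -/
def IsMulticycle (G : Digraph') (F : Finset (EdgeInst G)) : Prop :=
  (∀ e₁ ∈ F, ∀ e₂ ∈ F, esrc e₁ = esrc e₂ → e₁ = e₂) ∧
  (∀ e₁ ∈ F, ∀ e₂ ∈ F, etgt e₁ = etgt e₂ → e₁ = e₂) ∧
  (∀ v : G.V, (∃ e ∈ F, esrc e = v) ↔ ∃ e ∈ F, etgt e = v)

/-- The number of connected components (simple cycles) of a multicycle. -/
def numComponents (G : Digraph') (F : Finset (EdgeInst G)) : ℕ :=
  Nat.card (Quot fun a b : {v : G.V // ∃ e ∈ F, esrc e = v} =>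
    ∃ e ∈ F, esrc e = a.val ∧ etgt e = b.val)

/-- A simple cycle: a connected multicycle. -/
def IsSimpleCycle (G : Digraph') (F : Finset (EdgeInst G)) : Prop :=
  IsMulticycle G F ∧ numComponents G F = 1

/-- A graph has bounded cycles: bounded outgoing degree and finitely many simple cycles of
each length. -/
def HasBoundedCycles (G : Digraph') : Prop :=
  (∃ D : ℕ, ∀ v, (∑ᶠ w, G.E v w) ≤ D) ∧
  ∀ n : ℕ, {F : Finset (EdgeInst G) | IsSimpleCycle G F ∧ F.card = n}.Finite

/-- The `n`-th coefficient `Σ_{γ multicycle of length n} (-1)^{C(γ)}` of the spectral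
determinant. -/
def specCoeff (G : Digraph') (n : ℕ) : ℤ :=
  ∑ᶠ F ∈ {F : Finset (EdgeInst G) | IsMulticycle G F ∧ F.card = n},
    (-1 : ℤ) ^ numComponents G F

/-- The spectral determinant `P(z) = Σ_γ (-1)^{C(γ)} z^{ℓ(γ)}`. -/
def specDet (G : Digraph') (z : ℂ) : ℂ := ∑' n : ℕ, (specCoeff G n : ℂ) * z ^ n

/-- Paths of length `n` from `v₀` to `v₀`. -/
def BasedPaths (G : Digraph') (v₀ : G.V) (n : ℕ) : Type :=
  {p : Σ v : Fin (n + 1) → G.V, (i : Fin n) → Fin (G.E (v i.castSucc) (v i.succ)) //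
    p.1 0 = v₀ ∧ p.1 (Fin.last n) = v₀}

end CoreEntropy

namespace CoreEntropy

/-! ### Auxiliary lemmas -/

section Aux

lemma abs_pt (θ : Circ) : ‖pt θ‖ = 1 := Circle.norm_coe _

lemma norm_pt (θ : Circ) : ‖pt θ‖ = 1 := abs_pt θ

lemma pt_injective : Function.Injective pt := by
  intro a b h
  exact AddCircle.injective_toCircle one_ne_zero (Subtype.ext h)

lemma mem_hull {θ : Circ} {ℓ : Finset Circ} (h : θ ∈ ℓ) : pt θ ∈ hull ℓ :=
  subset_convexHull ℝ _ (Set.mem_image_of_mem pt h)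

lemma hull_nonempty {ℓ : Finset Circ} (h : ℓ.Nonempty) : (hull ℓ).Nonempty :=
  ⟨pt h.choose, mem_hull h.choose_spec⟩

lemma hull_isCompact (ℓ : Finset Circ) : IsCompact (hull ℓ) :=
  Set.Finite.isCompact_convexHull ℝ ((ℓ.finite_toSet).image pt)

lemma hull_subset_disk (ℓ : Finset Circ) : hull ℓ ⊆ disk := by
  refine convexHull_min ?_ (convex_closedBall _ _)
  rintro z ⟨θ, -, rfl⟩
  simpa [disk, Metric.mem_closedBall, dist_eq_norm] using (norm_pt θ).le

lemma hull_bounded (ℓ : Finset Circ) : Bornology.IsBounded (hull ℓ) :=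
  (Metric.isBounded_closedBall (x := (0:ℂ)) (r := 1)).subset (hull_subset_disk ℓ)

/-- Norm of `exp (t * I) - 1`. -/
lemma norm_exp_mul_I_sub_one (t : ℝ) :
    ‖Complex.exp (t * Complex.I) - 1‖ = 2 * |Real.sin (t / 2)| := by
  have h1 : Complex.exp (t * Complex.I) - 1
      = Complex.ofReal (Real.cos t - 1) + Complex.ofReal (Real.sin t) * Complex.I := by
    rw [Complex.exp_mul_I]
    push_cast
    ring
  rw [h1, Complex.norm_add_mul_I]
  have h2 : (Real.cos t - 1) ^ 2 + Real.sin t ^ 2 = (2 * |Real.sin (t / 2)|) ^ 2 := by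
    have hs : Real.sin (t / 2) ^ 2 = 1 / 2 - Real.cos (2 * (t / 2)) / 2 :=
      Real.sin_sq_eq_half_sub (t / 2)
    have h2t : (2 : ℝ) * (t / 2) = t := by ring
    rw [h2t] at hs
    have hsc : Real.sin t ^ 2 = 1 - Real.cos t ^ 2 := by
      have := Real.sin_sq_add_cos_sq t; linarith
    have habs : |Real.sin (t / 2)| ^ 2 = Real.sin (t / 2) ^ 2 := sq_abs _
    rw [mul_pow, habs, hs, hsc]
    ring
  rw [h2, Real.sqrt_sq (by positivity)]

/-- A representative of the difference of two circle points. -/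
lemma exists_rep (θ θ' : Circ) :
    ∃ x : ℝ, (x : Circ) = θ - θ' ∧ |x| ≤ 1 / 2 ∧ dist θ θ' ≤ |x| := by
  obtain ⟨r, hr⟩ : ∃ r : ℝ, (r : Circ) = θ - θ' := Quotient.exists_rep _
  refine ⟨r - round r, ?_, abs_sub_round r, ?_⟩
  · have hz : ((round r : ℝ) : Circ) = 0 := by
      rw [QuotientAddGroup.eq_zero_iff]
      exact ⟨round r, by simp⟩
    rw [QuotientAddGroup.mk_sub, hz, hr, sub_zero]
  · have h1 : dist θ θ' = ‖θ - θ'‖ := dist_eq_norm _ _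
    rw [h1, ← hr]
    have h2 : ‖(r : Circ)‖ = |r - round ((1:ℝ)⁻¹ * r) * 1| := AddCircle.norm_eq 1
    rw [h2]
    simpa using round_le r 0

lemma dist_circ_le_half (θ θ' : Circ) : dist θ θ' ≤ 1 / 2 := by
  obtain ⟨x, -, hx2, hx3⟩ := exists_rep θ θ'
  exact hx3.trans hx2

/-- The chord bounds the arc: `4 dist(θ,θ') ≤ ‖pt θ - pt θ'‖`. -/
lemma four_dist_le_norm_pt_sub (θ θ' : Circ) : 4 * dist θ θ' ≤ ‖pt θ - pt θ'‖ := by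
  obtain ⟨x, hx1, hx2, hx3⟩ := exists_rep θ θ'
  have hθ : θ = (x : Circ) + θ' := by rw [hx1]; abel
  have hpt : pt θ - pt θ' = ((AddCircle.toCircle ((x : Circ)) : ℂ) - 1) * pt θ' := by
    rw [hθ]
    simp only [pt, AddCircle.toCircle_add]
    push_cast
    ring
  have hx0 : (AddCircle.toCircle ((x : Circ) : Circ) : ℂ)
      = Complex.exp ((2 * Real.pi * x : ℝ) * Complex.I) := by
    rw [AddCircle.toCircle_apply_mk, Circle.coe_exp]
    norm_num
  have hnorm : ‖pt θ - pt θ'‖ = 2 * |Real.sin (Real.pi * x)| := by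
    rw [hpt, norm_mul, norm_pt, mul_one, hx0, norm_exp_mul_I_sub_one]
    congr 2
    ring
  have hsin : 2 * |x| ≤ |Real.sin (Real.pi * x)| := by
    have habs : |Real.sin (Real.pi * x)| = Real.sin (Real.pi * |x|) := by
      rcases le_or_gt 0 x with h | h
      · rw [abs_of_nonneg h]
        exact abs_of_nonneg (Real.sin_nonneg_of_nonneg_of_le_pi (by positivity)
          (by nlinarith [Real.pi_pos, abs_of_nonneg h]))
      · have h0 : Real.sin (Real.pi * x) ≤ 0 := by
          have h1 : 0 ≤ Real.sin (-(Real.pi * x)) :=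
            Real.sin_nonneg_of_nonneg_of_le_pi (by nlinarith [Real.pi_pos])
              (by nlinarith [Real.pi_pos, abs_of_neg h])
          rw [Real.sin_neg] at h1; linarith
        rw [abs_of_neg h, abs_of_nonpos h0,
          show Real.pi * -x = -(Real.pi * x) by ring, Real.sin_neg]
    rw [habs]
    calc 2 * |x| = 2 / Real.pi * (Real.pi * |x|) := by
          field_simp
      _ ≤ Real.sin (Real.pi * |x|) := Real.mul_le_sin (by positivity)
          (by nlinarith [Real.pi_pos])
  rw [hnorm]
  linarith

end Aux


section Extract

/-- Decomposition of the "inner product gap" along a convex combination. -/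
lemma sum_weights_bound {ℓ : Finset Circ} (w : ℂ) {z : ℂ} (hz : z ∈ hull ℓ) :
    ∃ lam : ℂ → ℝ, (∀ y ∈ ℓ.image pt, 0 ≤ lam y) ∧ (∑ y ∈ ℓ.image pt, lam y = 1) ∧
      ∑ y ∈ ℓ.image pt, lam y * (1 - (w.re * y.re + w.im * y.im))
        = 1 - (w.re * z.re + w.im * z.im) := by
  have himg : hull ℓ = convexHull ℝ (↑(ℓ.image pt) : Set ℂ) := by
    rw [hull, Finset.coe_image]
  rw [himg, Finset.mem_convexHull'] at hz
  obtain ⟨lam, h0, h1, h2⟩ := hz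
  refine ⟨lam, h0, h1, ?_⟩
  have hzre : z.re = ∑ y ∈ ℓ.image pt, lam y * y.re := by
    rw [← h2, Complex.re_sum]
    exact Finset.sum_congr rfl fun y _ => by
      simp [Complex.real_smul, Complex.mul_re]
  have hzim : z.im = ∑ y ∈ ℓ.image pt, lam y * y.im := by
    rw [← h2, Complex.im_sum]
    exact Finset.sum_congr rfl fun y _ => by
      simp [Complex.real_smul, Complex.mul_im]
  have hexp : ∑ y ∈ ℓ.image pt, lam y * (1 - (w.re * y.re + w.im * y.im))
      = ∑ y ∈ ℓ.image pt,
          (lam y - (w.re * (lam y * y.re) + w.im * (lam y * y.im))) :=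
    Finset.sum_congr rfl fun y _ => by ring
  rw [hexp, Finset.sum_sub_distrib, Finset.sum_add_distrib, ← Finset.mul_sum, ← Finset.mul_sum,
    h1, ← hzre, ← hzim]

lemma norm_sub_sq_of_abs_one {w v : ℂ} (hw : ‖w‖ = 1) (hv : ‖v‖ = 1) :
    ‖w - v‖ ^ 2 = 2 * (1 - (w.re * v.re + w.im * v.im)) := by
  have h1 : w.re * w.re + w.im * w.im = 1 := by
    have := Complex.sq_norm w; rw [hw] at this
    rw [← Complex.normSq_apply]; simpa using this.symm
  have h2 : v.re * v.re + v.im * v.im = 1 := by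
    have := Complex.sq_norm v; rw [hv] at this
    rw [← Complex.normSq_apply]; simpa using this.symm
  have h3 : ‖w - v‖ ^ 2 = Complex.normSq (w - v) := by
    rw [Complex.sq_norm]
  rw [h3, Complex.normSq_apply, Complex.sub_re, Complex.sub_im]
  nlinarith [h1, h2]

lemma inner_gap_le_norm {w z : ℂ} (hw : ‖w‖ = 1) :
    1 - (w.re * z.re + w.im * z.im) ≤ ‖w - z‖ := by
  have h1 : w.re * w.re + w.im * w.im = 1 := by
    have := Complex.sq_norm w; rw [hw] at this
    rw [← Complex.normSq_apply]; simpa using this.symm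
  have h2 : ‖w - z‖ ^ 2 = (w - z).re ^ 2 + (w - z).im ^ 2 := by
    rw [Complex.sq_norm, Complex.normSq_apply]; ring
  have h3 : 1 - (w.re * z.re + w.im * z.im) = w.re * (w - z).re + w.im * (w - z).im := by
    rw [Complex.sub_re, Complex.sub_im]; nlinarith [h1]
  rw [h3]
  nlinarith [sq_nonneg (w.re * (w - z).im - w.im * (w - z).re), norm_nonneg (w - z), h2, h1]

/-- Approximate extreme-point extraction: a unit vector close to the hull of a finite
set of circle points is close to one of these points. -/
lemma exists_close_vertex {ℓ : Finset Circ} {w z : ℂ} (hw : ‖w‖ = 1)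
    (hz : z ∈ hull ℓ) {ε : ℝ} (hε : 0 < ε) (hwz : ‖w - z‖ ≤ ε) :
    ∃ u ∈ ℓ, ‖w - pt u‖ ^ 2 ≤ 4 * ε := by
  obtain ⟨lam, h0, h1, hkey⟩ := sum_weights_bound w hz
  by_contra hcon
  push_neg at hcon
  have hge : ∀ y ∈ ℓ.image pt, lam y * (2 * ε) ≤ lam y * (1 - (w.re * y.re + w.im * y.im)) := by
    intro y hy
    obtain ⟨u, hu, rfl⟩ := Finset.mem_image.mp hy
    have hgap : 2 * ε ≤ 1 - (w.re * (pt u).re + w.im * (pt u).im) := by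
      have := hcon u hu
      have hsq := norm_sub_sq_of_abs_one hw (abs_pt u)
      linarith
    rcases eq_or_lt_of_le (h0 _ hy) with h | h
    · rw [← h]; simp
    · exact mul_le_mul_of_nonneg_left hgap (le_of_lt h)
  have hsum : 2 * ε ≤ 1 - (w.re * z.re + w.im * z.im) := by
    calc 2 * ε = ∑ y ∈ ℓ.image pt, lam y * (2 * ε) := by
          rw [← Finset.sum_mul, h1, one_mul]
      _ ≤ ∑ y ∈ ℓ.image pt, lam y * (1 - (w.re * y.re + w.im * y.im)) :=
          Finset.sum_le_sum hge
      _ = _ := hkey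
  have hub := inner_gap_le_norm (z := z) hw
  linarith

/-- Arc-distance version. -/
lemma exists_close_vertex_dist {ℓ : Finset Circ} {θ : Circ} {z : ℂ}
    (hz : z ∈ hull ℓ) {η : ℝ} (hη : 0 < η) (hwz : ‖pt θ - z‖ ≤ 4 * η ^ 2) :
    ∃ u ∈ ℓ, dist θ u ≤ η := by
  obtain ⟨u, hu, hb⟩ := exists_close_vertex (abs_pt θ) hz (by positivity) hwz
  refine ⟨u, hu, ?_⟩
  have h4 := four_dist_le_norm_pt_sub θ u
  nlinarith [dist_nonneg (x := θ) (y := u), norm_nonneg (pt θ - pt u), hη.le]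

/-- Exact extreme-point lemma: a circle point in the hull of a finite set of circle
points is one of them. -/
lemma mem_of_pt_mem_hull {ℓ : Finset Circ} {θ : Circ} (h : pt θ ∈ hull ℓ) : θ ∈ ℓ := by
  obtain ⟨lam, h0, h1, hkey⟩ := sum_weights_bound (pt θ) h
  have h1' : (pt θ).re * (pt θ).re + (pt θ).im * (pt θ).im = 1 := by
    have := Complex.sq_norm (pt θ); rw [abs_pt] at this
    rw [← Complex.normSq_apply]; simpa using this.symm
  have hzero : ∑ y ∈ ℓ.image pt, lam y * (1 - ((pt θ).re * y.re + (pt θ).im * y.im)) = 0 := by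
    rw [hkey]; linarith
  have hnn : ∀ y ∈ ℓ.image pt,
      0 ≤ lam y * (1 - ((pt θ).re * y.re + (pt θ).im * y.im)) := by
    intro y hy
    obtain ⟨u, hu, rfl⟩ := Finset.mem_image.mp hy
    have hsq := norm_sub_sq_of_abs_one (abs_pt θ) (abs_pt u)
    have := sq_nonneg (‖pt θ - pt u‖)
    exact mul_nonneg (h0 _ hy) (by nlinarith)
  have hall := (Finset.sum_eq_zero_iff_of_nonneg hnn).mp hzero
  have hex : ∃ y ∈ ℓ.image pt, lam y ≠ 0 := by
    by_contra hno
    push_neg at hno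
    have : (1 : ℝ) = 0 := by
      rw [← h1]
      exact Finset.sum_eq_zero hno
    norm_num at this
  obtain ⟨y, hy, hlam⟩ := hex
  obtain ⟨u, hu, rfl⟩ := Finset.mem_image.mp hy
  have hterm := hall _ hy
  have hgap : 1 - ((pt θ).re * (pt u).re + (pt θ).im * (pt u).im) = 0 := by
    rcases mul_eq_zero.mp hterm with h' | h'
    · exact absurd h' hlam
    · exact h'
  have hsq := norm_sub_sq_of_abs_one (abs_pt θ) (abs_pt u)
  have : ‖pt θ - pt u‖ ^ 2 = 0 := by rw [hsq, hgap]; ring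
  have hpt : pt θ = pt u := by
    have := pow_eq_zero_iff (n := 2) (by norm_num) |>.mp this
    have := norm_sub_eq_zero_iff.mp this
    exact this
  rwa [pt_injective hpt]

end Extract


section Met

variable {m : Collection} {x y : Circ}

/-- The set of chain values defining `met`. -/
def chainSet (m : Collection) (x y : Circ) : Set ℝ :=
  { r : ℝ | ∃ n : ℕ, ∃ p q : ℕ → Circ, p 0 = x ∧ q n = y ∧
    (∀ i < n, Collapses m (q i) (p (i + 1))) ∧
    r = ∑ i ∈ Finset.range (n + 1), dist (p i) (q i) }

lemma met_eq_sInf (m : Collection) (x y : Circ) : met m x y = sInf (chainSet m x y) := rfl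

lemma chainSet_nonempty (m : Collection) (x y : Circ) : (chainSet m x y).Nonempty :=
  ⟨dist x y, 0, fun _ => x, fun _ => y, rfl, rfl,
    fun i hi => absurd hi (Nat.not_lt_zero i), by simp⟩

lemma chainSet_bddBelow (m : Collection) (x y : Circ) : BddBelow (chainSet m x y) := by
  refine ⟨0, ?_⟩
  rintro r ⟨n, p, q, -, -, -, rfl⟩
  exact Finset.sum_nonneg fun i _ => dist_nonneg

lemma met_le_chain {r : ℝ} (hr : r ∈ chainSet m x y) : met m x y ≤ r :=
  csInf_le (chainSet_bddBelow m x y) hr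

lemma met_nonneg (m : Collection) (x y : Circ) : 0 ≤ met m x y := by
  refine le_csInf (chainSet_nonempty m x y) ?_
  rintro r ⟨n, p, q, -, -, -, rfl⟩
  exact Finset.sum_nonneg fun i _ => dist_nonneg

lemma met_le_dist (m : Collection) (x y : Circ) : met m x y ≤ dist x y :=
  met_le_chain ⟨0, fun _ => x, fun _ => y, rfl, rfl,
    fun i hi => absurd hi (Nat.not_lt_zero i), by simp⟩

lemma met_eq_zero_of_collapses {a b : Circ} (h : Collapses m a b) : met m a b = 0 := by
  refine le_antisymm ?_ (met_nonneg m a b)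
  refine met_le_chain ⟨1, fun i => if i = 0 then a else b, fun i => if i = 0 then a else b,
    by simp, by simp, ?_, ?_⟩
  · intro i hi
    have : i = 0 := by omega
    subst this
    simpa using h
  · rw [Finset.sum_range_succ, Finset.sum_range_one]
    simp

lemma met_self (m : Collection) (a : Circ) : met m a a = 0 :=
  met_eq_zero_of_collapses (Or.inl rfl)

lemma met_triangle (m : Collection) (x y z : Circ) :
    met m x z ≤ met m x y + met m y z := by
  refine le_of_forall_pos_le_add fun ε hε => ?_
  obtain ⟨r1, hr1, hr1'⟩ := exists_lt_of_csInf_lt (chainSet_nonempty m x y)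
    (lt_add_of_pos_right _ (half_pos hε) : sInf (chainSet m x y) < _)
  obtain ⟨r2, hr2, hr2'⟩ := exists_lt_of_csInf_lt (chainSet_nonempty m y z)
    (lt_add_of_pos_right _ (half_pos hε) : sInf (chainSet m y z) < _)
  obtain ⟨n1, p1, q1, hp1, hq1, hc1, hs1⟩ := hr1
  obtain ⟨n2, p2, q2, hp2, hq2, hc2, hs2⟩ := hr2
  have hmem : r1 + r2 ∈ chainSet m x z := by
    refine ⟨n1 + 1 + n2, (fun i => if i ≤ n1 then p1 i else p2 (i - (n1 + 1))),
      (fun i => if i ≤ n1 then q1 i else q2 (i - (n1 + 1))), by simp [hp1], ?_, ?_, ?_⟩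
    · have h1 : ¬ (n1 + 1 + n2 ≤ n1) := by omega
      simp only [if_neg h1]
      rw [show n1 + 1 + n2 - (n1 + 1) = n2 by omega, hq2]
    · intro i hi
      rcases lt_trichotomy i n1 with h | h | h
      · simp only [if_pos h.le, if_pos (by omega : i + 1 ≤ n1)]
        exact hc1 i (by omega)
      · simp only [if_pos h.le, if_neg (by omega : ¬ (i + 1 ≤ n1))]
        rw [show i + 1 - (n1 + 1) = 0 by omega]
        exact Or.inl (by rw [h, hq1, hp2])
      · simp only [if_neg (by omega : ¬ (i ≤ n1)), if_neg (by omega : ¬ (i + 1 ≤ n1))]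
        rw [show i + 1 - (n1 + 1) = (i - (n1 + 1)) + 1 by omega]
        exact hc2 _ (by omega)
    · rw [hs1, hs2]
      conv_rhs => rw [show n1 + 1 + n2 + 1 = (n1 + 1) + (n2 + 1) by ring,
        Finset.sum_range_add]
      congr 1
      · refine Finset.sum_congr rfl fun i hi => ?_
        rw [Finset.mem_range] at hi
        simp only [if_pos (show i ≤ n1 by omega)]
      · refine Finset.sum_congr rfl fun i hi => ?_
        simp only [if_neg (show ¬ (n1 + 1 + i ≤ n1) by omega)]
        rw [show n1 + 1 + i - (n1 + 1) = i by omega]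
  calc met m x z ≤ r1 + r2 := met_le_chain hmem
    _ ≤ (met m x y + ε / 2) + (met m y z + ε / 2) :=
        add_le_add hr1'.le hr2'.le
    _ = met m x y + met m y z + ε := by ring

end Met


section Surgery

variable {m : Collection}

/-- Summation by blocks. -/
lemma sum_le_sum_blocks {G : ℕ → ℝ} (hG : ∀ t, 0 ≤ G t) (g : ℕ → ℕ)
    (hmono : ∀ t, g t ≤ g (t + 1)) (F : ℕ → ℝ) (a : ℕ)
    (h : ∀ t < a, F t ≤ ∑ s ∈ Finset.Ico (g t) (g (t + 1)), G s) :
    ∑ t ∈ Finset.range a, F t ≤ ∑ s ∈ Finset.Ico (g 0) (g a), G s := by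
  induction a with
  | zero => simp
  | succ a ih =>
    rw [Finset.sum_range_succ]
    have hga : g 0 ≤ g a := monotone_nat_of_le_succ hmono (Nat.zero_le a)
    calc ∑ t ∈ Finset.range a, F t + F a
        ≤ (∑ s ∈ Finset.Ico (g 0) (g a), G s) + ∑ s ∈ Finset.Ico (g a) (g (a + 1)), G s :=
          add_le_add (ih fun t ht => h t (by omega)) (h a (by omega))
      _ = ∑ s ∈ Finset.Ico (g 0) (g (a + 1)), G s :=
          Finset.sum_Ico_consecutive _ hga (hmono a)

lemma chain_merge {n i : ℕ} {p q : ℕ → Circ} (hin : i < n)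
    (hc : ∀ t < n, Collapses m (q t) (p (t + 1))) (heq : q i = p (i + 1)) :
    ∃ p' q' : ℕ → Circ, p' 0 = p 0 ∧ q' (n - 1) = q n ∧
      (∀ t < n - 1, Collapses m (q' t) (p' (t + 1))) ∧
      ∑ t ∈ Finset.range ((n - 1) + 1), dist (p' t) (q' t) ≤
        ∑ t ∈ Finset.range (n + 1), dist (p t) (q t) := by
  refine ⟨fun t => if t ≤ i then p t else p (t + 1),
    fun t => if t < i then q t else q (t + 1), by simp, ?_, ?_, ?_⟩
  · dsimp only
    rw [if_neg (show ¬ n - 1 < i by omega)]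
    congr 1
    omega
  · intro t ht
    rcases lt_or_ge t i with h | h
    · simp only [if_pos h, if_pos (show t + 1 ≤ i by omega)]
      exact hc t (by omega)
    · simp only [if_neg (show ¬ t < i by omega), if_neg (show ¬ t + 1 ≤ i by omega)]
      rw [show t + 1 + 1 = (t + 1) + 1 by omega]
      exact hc (t + 1) (by omega)
  · have hres : ∑ s ∈ Finset.Ico ((fun t => if t ≤ i then t else t + 1) 0)
        ((fun t => if t ≤ i then t else t + 1) ((n - 1) + 1)), dist (p s) (q s)
        = ∑ t ∈ Finset.range (n + 1), dist (p t) (q t) := by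
      simp only [if_pos (Nat.zero_le i), if_neg (show ¬ (n - 1) + 1 ≤ i by omega)]
      rw [show (n - 1) + 1 + 1 = n + 1 by omega, ← Finset.range_eq_Ico]
    rw [← hres]
    refine sum_le_sum_blocks (G := fun s => dist (p s) (q s)) (fun t => dist_nonneg)
      (fun t => if t ≤ i then t else t + 1) ?_
      (fun t => dist (if t ≤ i then p t else p (t + 1)) (if t < i then q t else q (t + 1)))
      ((n - 1) + 1) ?_
    · intro t
      split_ifs <;> omega
    · intro t ht
      rcases lt_trichotomy t i with h | h | h
      · rw [if_pos h.le, if_pos h.le, if_pos (show t + 1 ≤ i by omega), if_pos h,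
          Nat.Ico_succ_singleton, Finset.sum_singleton]
      · subst h
        rw [if_pos (le_refl t), if_pos (le_refl t), if_neg (show ¬ t + 1 ≤ t by omega),
          if_neg (lt_irrefl t)]
        rw [show t + 1 + 1 = (t + 1) + 1 by omega,
          Finset.sum_Ico_succ_top (by omega : t ≤ t + 1), Nat.Ico_succ_singleton,
          Finset.sum_singleton]
        calc dist (p t) (q (t + 1)) ≤ dist (p t) (q t) + dist (q t) (q (t + 1)) :=
              dist_triangle _ _ _
          _ = dist (p t) (q t) + dist (p (t + 1)) (q (t + 1)) := by rw [heq]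
      · rw [if_neg (show ¬ t ≤ i by omega), if_neg (show ¬ t + 1 ≤ i by omega),
          if_neg (show ¬ t < i by omega), if_neg (show ¬ t ≤ i by omega)]
        rw [show t + 1 + 1 = (t + 1) + 1 by omega, Nat.Ico_succ_singleton,
          Finset.sum_singleton]

lemma chain_shortcut {n i j : ℕ} {p q : ℕ → Circ} (hij : i < j) (hjn : j < n)
    (hc : ∀ t < n, Collapses m (q t) (p (t + 1)))
    {k : Fin m.s} (h1 : q i ∈ m.leaf k) (h2 : p (j + 1) ∈ m.leaf k) :
    ∃ p' q' : ℕ → Circ, p' 0 = p 0 ∧ q' (n - (j - i)) = q n ∧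
      (∀ t < n - (j - i), Collapses m (q' t) (p' (t + 1))) ∧
      ∑ t ∈ Finset.range ((n - (j - i)) + 1), dist (p' t) (q' t) ≤
        ∑ t ∈ Finset.range (n + 1), dist (p t) (q t) := by
  set D := j - i with hD
  refine ⟨fun t => if t ≤ i then p t else p (t + D),
    fun t => if t ≤ i then q t else q (t + D), by simp, ?_, ?_, ?_⟩
  · dsimp only
    rw [if_neg (show ¬ n - D ≤ i by omega)]
    congr 1
    omega
  · intro t ht
    rcases lt_trichotomy t i with h | h | h
    · simp only [if_pos h.le, if_pos (show t + 1 ≤ i by omega)]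
      exact hc t (by omega)
    · simp only [if_pos h.le, if_neg (show ¬ t + 1 ≤ i by omega)]
      rw [show t + 1 + D = j + 1 by omega, h]
      exact Or.inr ⟨k, h1, h2⟩
    · simp only [if_neg (show ¬ t ≤ i by omega), if_neg (show ¬ t + 1 ≤ i by omega)]
      rw [show t + 1 + D = (t + D) + 1 by omega]
      exact hc (t + D) (by omega)
  · have hres : ∑ s ∈ Finset.Ico ((fun t => if t ≤ i then t else t + D) 0)
        ((fun t => if t ≤ i then t else t + D) ((n - D) + 1)), dist (p s) (q s)
        = ∑ t ∈ Finset.range (n + 1), dist (p t) (q t) := by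
      simp only [if_pos (Nat.zero_le i), if_neg (show ¬ (n - D) + 1 ≤ i by omega)]
      rw [show (n - D) + 1 + D = n + 1 by omega, ← Finset.range_eq_Ico]
    rw [← hres]
    refine sum_le_sum_blocks (G := fun s => dist (p s) (q s)) (fun t => dist_nonneg)
      (fun t => if t ≤ i then t else t + D) ?_
      (fun t => dist (if t ≤ i then p t else p (t + D)) (if t ≤ i then q t else q (t + D)))
      ((n - D) + 1) ?_
    · intro t
      split_ifs <;> omega
    · intro t ht
      rcases lt_trichotomy t i with h | h | h
      · rw [if_pos h.le, if_pos h.le, if_pos h.le, if_pos (show t + 1 ≤ i by omega),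
          Nat.Ico_succ_singleton, Finset.sum_singleton]
      · subst h
        rw [if_pos (le_refl t), if_pos (le_refl t), if_pos (le_refl t),
          if_neg (show ¬ t + 1 ≤ t by omega)]
        refine Finset.single_le_sum (f := fun s => dist (p s) (q s))
          (fun s _ => dist_nonneg) ?_
        rw [Finset.mem_Ico]
        omega
      · rw [if_neg (show ¬ t ≤ i by omega), if_neg (show ¬ t ≤ i by omega),
          if_neg (show ¬ t ≤ i by omega), if_neg (show ¬ t + 1 ≤ i by omega)]
        rw [show t + 1 + D = (t + D) + 1 by omega, Nat.Ico_succ_singleton,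
          Finset.sum_singleton]

/-- Any chain can be reduced to one of length at most `m.s` without increasing its value. -/
lemma chain_reduce (m : Collection) : ∀ n : ℕ, ∀ p q : ℕ → Circ,
    (∀ i < n, Collapses m (q i) (p (i + 1))) →
    ∃ n' : ℕ, ∃ p' q' : ℕ → Circ, n' ≤ m.s ∧ p' 0 = p 0 ∧ q' n' = q n ∧
      (∀ i < n', Collapses m (q' i) (p' (i + 1))) ∧
      ∑ i ∈ Finset.range (n' + 1), dist (p' i) (q' i) ≤
        ∑ i ∈ Finset.range (n + 1), dist (p i) (q i) := by
  intro n
  induction n using Nat.strong_induction_on with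
  | _ n ih =>
    intro p q hc
    by_cases hn : n ≤ m.s
    · exact ⟨n, p, q, hn, rfl, rfl, hc, le_refl _⟩
    push_neg at hn
    by_cases hstep : ∃ i, i < n ∧ ∀ k : Fin m.s, ¬ (q i ∈ m.leaf k ∧ p (i + 1) ∈ m.leaf k)
    · obtain ⟨i, hin, hno⟩ := hstep
      have heq : q i = p (i + 1) := by
        rcases hc i hin with h | ⟨k, hk⟩
        · exact h
        · exact absurd hk (hno k)
      obtain ⟨p', q', hp', hq', hcol, hsum⟩ := chain_merge hin hc heq
      obtain ⟨n'', p'', q'', h1, h2, h3, h4, h5⟩ := ih (n - 1) (by omega) p' q' hcol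
      exact ⟨n'', p'', q'', h1, by rw [h2, hp'], by rw [h3, hq'], h4, le_trans h5 hsum⟩
    · push_neg at hstep
      have hsel : ∀ i : Fin n, ∃ k : Fin m.s,
          q (i : ℕ) ∈ m.leaf k ∧ p ((i : ℕ) + 1) ∈ m.leaf k := by
        intro i
        obtain ⟨k, hk⟩ := hstep (i : ℕ) i.isLt
        exact ⟨k, hk⟩
      choose f hf using hsel
      obtain ⟨a, b, hab, hfab⟩ := Fintype.exists_ne_map_eq_of_card_lt f
        (by simpa using hn)
      rcases lt_or_gt_of_ne (fun h : (a : ℕ) = (b : ℕ) => hab (Fin.ext h)) with h | h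
      · obtain ⟨p', q', hp', hq', hcol, hsum⟩ := chain_shortcut h b.isLt hc
          (hf a).1 (hfab ▸ (hf b).2)
        obtain ⟨n'', p'', q'', h1, h2, h3, h4, h5⟩ :=
          ih (n - ((b : ℕ) - (a : ℕ))) (by omega) p' q' hcol
        exact ⟨n'', p'', q'', h1, by rw [h2, hp'], by rw [h3, hq'], h4, le_trans h5 hsum⟩
      · obtain ⟨p', q', hp', hq', hcol, hsum⟩ := chain_shortcut h a.isLt hc
          (hf b).1 (hfab ▸ (hf a).2)
        obtain ⟨n'', p'', q'', h1, h2, h3, h4, h5⟩ :=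
          ih (n - ((a : ℕ) - (b : ℕ))) (by omega) p' q' hcol
        exact ⟨n'', p'', q'', h1, by rw [h2, hp'], by rw [h3, hq'], h4, le_trans h5 hsum⟩

end Surgery


section Transfer

lemma exists_chain_le (m : Collection) (x y : Circ) {ε : ℝ} (hε : 0 < ε) :
    ∃ n, ∃ p q : ℕ → Circ, n ≤ m.s ∧ p 0 = x ∧ q n = y ∧
      (∀ i < n, Collapses m (q i) (p (i + 1))) ∧
      ∑ i ∈ Finset.range (n + 1), dist (p i) (q i) ≤ met m x y + ε := by
  obtain ⟨r, hr, hr'⟩ := exists_lt_of_csInf_lt (chainSet_nonempty m x y)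
    (lt_add_of_pos_right _ hε : sInf (chainSet m x y) < _)
  obtain ⟨n, p, q, hp, hq, hc, hs⟩ := hr
  obtain ⟨n', p', q', h1, h2, h3, h4, h5⟩ := chain_reduce m n p q hc
  exact ⟨n', p', q', h1, by rw [h2, hp], by rw [h3, hq], h4,
    le_trans (hs ▸ h5) hr'.le⟩

lemma met_le_of_chain (m' : Collection) {δ : ℝ} :
    ∀ (n : ℕ) (p q : ℕ → Circ), (∀ i < n, met m' (q i) (p (i + 1)) ≤ δ) →
      met m' (p 0) (q n) ≤ ∑ i ∈ Finset.range (n + 1), dist (p i) (q i) + n * δ := by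
  intro n
  induction n with
  | zero => intro p q _; simpa using met_le_dist m' (p 0) (q 0)
  | succ n ih =>
    intro p q h
    have t1 := met_triangle m' (p 0) (q n) (q (n + 1))
    have t2 := met_triangle m' (q n) (p (n + 1)) (q (n + 1))
    have h3 := ih p q fun i hi => h i (by omega)
    have h4 := h n (by omega)
    have h5 := met_le_dist m' (p (n + 1)) (q (n + 1))
    rw [Finset.sum_range_succ]
    have hcast : ((n + 1 : ℕ) : ℝ) = (n : ℝ) + 1 := by push_cast; ring
    rw [hcast]
    linarith

/-- Transfer lemma: if collapsed pairs of `m` are `δ`-close in `met m'`, then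
`met m'` is controlled by `met m`. -/
lemma met_close {m m' : Collection} {δ : ℝ} (hδ : 0 ≤ δ)
    (happ : ∀ k : Fin m.s, ∀ u ∈ m.leaf k, ∀ v ∈ m.leaf k, met m' u v ≤ δ)
    (x y : Circ) : met m' x y ≤ met m x y + m.s * δ := by
  refine le_of_forall_pos_le_add fun ε hε => ?_
  obtain ⟨n, p, q, hn, hp, hq, hcol, hsum⟩ := exists_chain_le m x y hε
  have hstep : ∀ i < n, met m' (q i) (p (i + 1)) ≤ δ := by
    intro i hi
    rcases hcol i hi with h | ⟨k, hk1, hk2⟩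
    · rw [h]
      exact le_trans (le_of_eq (met_self m' _)) hδ
    · exact happ k _ hk1 _ hk2
  have hch := met_le_of_chain m' n p q hstep
  rw [hp, hq] at hch
  refine hch.trans ?_
  have hcast : (n : ℝ) ≤ (m.s : ℝ) := Nat.cast_le.mpr hn
  nlinarith

lemma met_abs_sub_le (m m' : Collection) (x y : Circ) :
    |met m x y - met m' x y| ≤ 1 := by
  rw [abs_sub_le_iff]
  have h1 := met_le_dist m x y
  have h2 := met_le_dist m' x y
  have h3 := met_nonneg m x y
  have h4 := met_nonneg m' x y
  have h5 := dist_circ_le_half x y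
  constructor <;> linarith

lemma md_le {m m' : Collection} {a : ℝ}
    (h : ∀ x y, |met m x y - met m' x y| ≤ a) : md m m' ≤ a :=
  ciSup_le fun x => ciSup_le fun y => h x y

lemma md_nonneg (m m' : Collection) : 0 ≤ md m m' := by
  have hb : ∀ x : Circ, BddAbove (Set.range fun y => |met m x y - met m' x y|) := by
    intro x
    refine ⟨1, ?_⟩
    rintro r ⟨y, rfl⟩
    exact met_abs_sub_le m m' x y
  have hb2 : BddAbove (Set.range fun x => ⨆ y, |met m x y - met m' x y|) := by
    refine ⟨1, ?_⟩
    rintro r ⟨x, rfl⟩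
    exact ciSup_le fun y => met_abs_sub_le m m' x y
  calc (0 : ℝ) ≤ |met m 0 0 - met m' 0 0| := abs_nonneg _
    _ ≤ ⨆ y, |met m 0 y - met m' 0 y| := le_ciSup (hb 0) 0
    _ ≤ md m m' := le_ciSup hb2 0

lemma portrait_s_le {d : ℕ} {c : Collection} (h : IsPortrait d c) : c.s ≤ d - 1 := by
  have h2 : c.s = ∑ _k : Fin c.s, 1 := by simp
  calc c.s = ∑ _k : Fin c.s, 1 := h2
    _ ≤ ∑ k, ((c.leaf k).card - 1) := Finset.sum_le_sum fun k _ => by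
        have := h.two_le k; omega
    _ = d - 1 := h.degree

lemma combine_M {α : Type} (s : Finset α) (P : α → ℕ → Prop)
    (h : ∀ a ∈ s, ∃ M, ∀ n, M ≤ n → P a n) :
    ∃ M, ∀ n, M ≤ n → ∀ a ∈ s, P a n := by
  classical
  induction s using Finset.induction_on with
  | empty => exact ⟨0, fun n _ a ha => absurd ha (Finset.notMem_empty a)⟩
  | @insert a s hnot ih =>
    obtain ⟨M1, hM1⟩ := h a (Finset.mem_insert_self a s)
    obtain ⟨M2, hM2⟩ := ih fun b hb => h b (Finset.mem_insert_of_mem hb)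
    refine ⟨max M1 M2, fun n hn b hb => ?_⟩
    rcases Finset.mem_insert.mp hb with rfl | hb
    · exact hM1 n (le_trans (le_max_left _ _) hn)
    · exact hM2 n (le_trans (le_max_right _ _) hn) b hb

lemma exists_pos_forall {α : Type} (s : Finset α) (P : α → ℝ → Prop)
    (mono : ∀ a g g', 0 < g → g ≤ g' → P a g' → P a g)
    (h : ∀ a ∈ s, ∃ g, 0 < g ∧ P a g) : ∃ g, 0 < g ∧ ∀ a ∈ s, P a g := by
  classical
  induction s using Finset.induction_on with
  | empty => exact ⟨1, one_pos, fun a ha => absurd ha (Finset.notMem_empty a)⟩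
  | @insert a s hnot ih =>
    obtain ⟨g1, hg1, hP1⟩ := h a (Finset.mem_insert_self a s)
    obtain ⟨g2, hg2, hP2⟩ := ih fun b hb => h b (Finset.mem_insert_of_mem hb)
    refine ⟨min g1 g2, lt_min hg1 hg2, fun b hb => ?_⟩
    rcases Finset.mem_insert.mp hb with rfl | hb
    · exact mono b _ _ (lt_min hg1 hg2) (min_le_left _ _) hP1
    · exact mono b _ _ (lt_min hg1 hg2) (min_le_right _ _) (hP2 b hb)

lemma eqvGen_map {α β : Type} {r : α → α → Prop} {r' : β → β → Prop} (f : α → β)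
    (h : ∀ a b, r a b → r' (f a) (f b)) {a b : α} (hab : Relation.EqvGen r a b) :
    Relation.EqvGen r' (f a) (f b) := by
  induction hab with
  | rel a b h' => exact Relation.EqvGen.rel _ _ (h _ _ h')
  | refl a => exact Relation.EqvGen.refl _
  | symm a b _ ih => exact Relation.EqvGen.symm _ _ ih
  | trans a b c _ _ ih1 ih2 => exact Relation.EqvGen.trans _ _ _ ih1 ih2

lemma eqvGen_to_reflTransGen {α : Type} {r : α → α → Prop} (hsym : Symmetric r)
    {a b : α} (h : Relation.EqvGen r a b) : Relation.ReflTransGen r a b := by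
  induction h with
  | rel a b h' => exact Relation.ReflTransGen.single h'
  | refl a => exact Relation.ReflTransGen.refl
  | symm a b _ ih =>
    haveI : Std.Symm r := ⟨fun a b h => hsym h⟩
    exact Std.Symm.symm _ _ ih
  | trans a b c _ _ ih1 ih2 => exact Relation.ReflTransGen.trans ih1 ih2

lemma touchRel_symm (ξ : Collection) : Symmetric (touchRel ξ) :=
  fun _ _ ⟨z, hz⟩ => ⟨z, hz.2, hz.1⟩

lemma touch_common_vertex {d : ℕ} {ξ : Collection} (hξ : IsPortrait d ξ)
    {k l : Fin ξ.s} (h : touchRel ξ k l) (hne : k ≠ l) :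
    ∃ θ : Circ, θ ∈ ξ.leaf k ∧ θ ∈ ξ.leaf l := by
  rcases hξ.touch k l hne with he | ⟨θ, hθ⟩
  · rw [touchRel, he] at h
    exact absurd h Set.not_nonempty_empty
  · have hmem : pt θ ∈ hull (ξ.leaf k) ∩ hull (ξ.leaf l) := by
      rw [hθ]; exact Set.mem_singleton _
    exact ⟨θ, mem_of_pt_mem_hull hmem.1, mem_of_pt_mem_hull hmem.2⟩

lemma mem_major_leaf {ξ mm : Collection} {c : Fin ξ.s → Fin mm.s}
    (hcleaf : ∀ t : Fin mm.s, mm.leaf t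
      = (Finset.univ.filter fun k => c k = t).biUnion ξ.leaf)
    {k : Fin ξ.s} {u : Circ} (hu : u ∈ ξ.leaf k) : u ∈ mm.leaf (c k) := by
  rw [hcleaf]
  exact Finset.mem_biUnion.mpr ⟨k, Finset.mem_filter.mpr ⟨Finset.mem_univ k, rfl⟩, hu⟩

/-- Direction 1, same-leaf bound. -/
lemma dir1_same {ξ' mm : Collection} (him : InducesMajor ξ' mm) {η : ℝ}
    {a : Fin ξ'.s} {u v u' v' : Circ} (hu' : u' ∈ ξ'.leaf a) (hv' : v' ∈ ξ'.leaf a)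
    (hdu : dist u u' ≤ η) (hdv : dist v v' ≤ η) : met mm u v ≤ 2 * η := by
  obtain ⟨c, -, -, hcleaf⟩ := him
  have hcol : Collapses mm u' v' :=
    Or.inr ⟨c a, mem_major_leaf hcleaf hu', mem_major_leaf hcleaf hv'⟩
  have t1 := met_triangle mm u u' v
  have t2 := met_triangle mm u' v' v
  have h1 := met_le_dist mm u u'
  have h2 := met_le_dist mm v' v
  have h3 := met_eq_zero_of_collapses hcol
  have h4 : dist v' v = dist v v' := dist_comm _ _
  linarith

/-- Direction 1, chain bound along touching leaves. -/
lemma dir1_chain {d : ℕ} {ξ : Collection} (hξ : IsPortrait d ξ) {k l : Fin ξ.s}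
    (h : Relation.ReflTransGen (touchRel ξ) k l) :
    ∃ N : ℕ, 0 < N ∧ ∀ ξ' mm : Collection, InducesMajor ξ' mm →
      ∀ η : ℝ, 0 < η →
      (∀ k' : Fin ξ.s, ∃ a : Fin ξ'.s, ∀ w ∈ ξ.leaf k', ∃ w' ∈ ξ'.leaf a, dist w w' ≤ η) →
      ∀ u ∈ ξ.leaf k, ∀ v ∈ ξ.leaf l, met mm u v ≤ (N : ℝ) * η := by
  induction h with
  | refl =>
    refine ⟨2, by norm_num, fun ξ' mm him η hη hQ u hu v hv => ?_⟩
    obtain ⟨a, ha⟩ := hQ k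
    obtain ⟨u', hu', hdu⟩ := ha u hu
    obtain ⟨v', hv', hdv⟩ := ha v hv
    have := dir1_same him hu' hv' hdu hdv
    push_cast
    linarith
  | @tail b c hkb hbc ih =>
    obtain ⟨N, hN, hb⟩ := ih
    rcases eq_or_ne b c with rfl | hne
    · exact ⟨N, hN, hb⟩
    · obtain ⟨θ, hθb, hθc⟩ := touch_common_vertex hξ hbc hne
      refine ⟨N + 2, by omega, fun ξ' mm him η hη hQ u hu v hv => ?_⟩
      have h1 := hb ξ' mm him η hη hQ u hu θ hθb
      obtain ⟨a, ha⟩ := hQ c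
      obtain ⟨θ', hθ', hdθ⟩ := ha θ hθc
      obtain ⟨v', hv', hdv⟩ := ha v hv
      have h2 := dir1_same him hθ' hv' hdθ hdv
      have t1 := met_triangle mm u θ v
      push_cast
      linarith

/-- Direction 2 bound. -/
lemma dir2_bound {ξ mm : Collection} (him : InducesMajor ξ mm)
    {ξ' mm' : Collection} (him' : InducesMajor ξ' mm') {η : ℝ}
    (σ : Fin ξ'.s → Fin ξ.s)
    (htr : ∀ a b, touchRel ξ' a b → touchRel ξ (σ a) (σ b))
    (happ : ∀ a : Fin ξ'.s, ∀ w' ∈ ξ'.leaf a, ∃ w ∈ ξ.leaf (σ a), dist w' w ≤ η) :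
    ∀ t' : Fin mm'.s, ∀ u' ∈ mm'.leaf t', ∀ v' ∈ mm'.leaf t',
      met mm u' v' ≤ 2 * η := by
  obtain ⟨c, -, hciff, hcleaf⟩ := him
  obtain ⟨c', -, hciff', hcleaf'⟩ := him'
  intro t' u' hu' v' hv'
  rw [hcleaf'] at hu' hv'
  obtain ⟨a, ha, hua⟩ := Finset.mem_biUnion.mp hu'
  obtain ⟨b, hb, hvb⟩ := Finset.mem_biUnion.mp hv'
  have hca : c' a = t' := (Finset.mem_filter.mp ha).2
  have hcb : c' b = t' := (Finset.mem_filter.mp hb).2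
  have hab : Relation.EqvGen (touchRel ξ') a b :=
    (hciff' a b).mp (hca.trans hcb.symm)
  have hσ : Relation.EqvGen (touchRel ξ) (σ a) (σ b) := eqvGen_map σ htr hab
  have hc : c (σ a) = c (σ b) := (hciff _ _).mpr hσ
  obtain ⟨u, hu, hdu⟩ := happ a u' hua
  obtain ⟨v, hv, hdv⟩ := happ b v' hvb
  have hcol : Collapses mm u v :=
    Or.inr ⟨c (σ a), mem_major_leaf hcleaf hu, hc ▸ mem_major_leaf hcleaf hv⟩
  have t1 := met_triangle mm u' u v'
  have t2 := met_triangle mm u v v'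
  have h1 := met_le_dist mm u' u
  have h2 := met_le_dist mm v v'
  have h3 := met_eq_zero_of_collapses hcol
  have h4 : dist u' u = dist u' u := rfl
  have h5 : dist v v' = dist v' v := dist_comm _ _
  linarith

end Transfer


lemma leaf_nonempty {d : ℕ} {c : Collection} (hc : IsPortrait d c) (k : Fin c.s) :
    (c.leaf k).Nonempty :=
  Finset.card_pos.mp (by have := hc.two_le k; omega)

lemma hull_edist_ne_top {d : ℕ} {c c' : Collection} (hc : IsPortrait d c)
    (hc' : IsPortrait d c') (a : Fin c.s) (k : Fin c'.s) :
    EMetric.hausdorffEdist (hull (c.leaf a)) (hull (c'.leaf k)) ≠ ⊤ :=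
  Metric.hausdorffEdist_ne_top_of_nonempty_of_bounded
    (hull_nonempty (leaf_nonempty hc a)) (hull_nonempty (leaf_nonempty hc' k))
    (hull_bounded _) (hull_bounded _)

/-- Let `(ξ_n)` be a sequence of critical portraits of degree `d` that
Hausdorff-converges to a critical portrait `ξ`.  If `m_n` denotes the primitive major
induced by `ξ_n` and `m` the primitive major induced by `ξ`, then `md(m_n, m) → 0`. -/
theorem induced_majors_converge (d : ℕ) (hd : 2 ≤ d)
    (ξn : ℕ → Collection) (hξn : ∀ n, IsPortrait d (ξn n))
    (ξ : Collection) (hξ : IsPortrait d ξ) (hconv : HConv ξn ξ)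
    (mn : ℕ → Collection) (m : Collection)
    (hmn : ∀ n, IsPrimitiveMajor d (mn n) ∧ InducesMajor (ξn n) (mn n))
    (hm : IsPrimitiveMajor d m ∧ InducesMajor ξ m) :
    Filter.Tendsto (fun n => md (mn n) m) Filter.atTop (nhds 0) := by
  classical
  obtain ⟨N₀, e, hcw⟩ := hconv
  obtain ⟨c, hcsurj, hciff, hcleaf⟩ := hm.2
  -- eventual Hausdorff-distance control, uniformly in the leaves
  have evHD : ∀ ε' : ℝ, 0 < ε' → ∃ M, N₀ ≤ M ∧ ∀ n, M ≤ n → ∀ hn : N₀ ≤ n,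
      ∀ k : Fin ξ.s, Metric.hausdorffDist
        (hull ((ξn n).leaf ((e n hn).symm k))) (hull (ξ.leaf k)) < ε' := by
    intro ε' hε'
    obtain ⟨M, hM⟩ := combine_M (Finset.univ : Finset (Fin ξ.s))
      (fun k n => ∀ hn : N₀ ≤ n, Metric.hausdorffDist
        (hull ((ξn n).leaf ((e n hn).symm k))) (hull (ξ.leaf k)) < ε')
      (fun k _ => by
        obtain ⟨M, hM⟩ := hcw k ε' hε'
        exact ⟨M, fun n hn hn' => hM n hn' hn⟩)
    exact ⟨max M N₀, le_max_right _ _, fun n hn hn' k =>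
      hM n (le_trans (le_max_left _ _) hn) k (Finset.mem_univ k) hn'⟩
  -- eventual leafwise vertex approximation (direction 1)
  have evQ : ∀ η : ℝ, 0 < η → ∃ M, ∀ n, M ≤ n →
      ∀ k' : Fin ξ.s, ∃ a : Fin (ξn n).s, ∀ w ∈ ξ.leaf k',
        ∃ w' ∈ (ξn n).leaf a, dist w w' ≤ η := by
    intro η hη
    obtain ⟨M, hMN, hM⟩ := evHD (4 * η ^ 2) (by positivity)
    refine ⟨M, fun n hn k' => ?_⟩
    have hn' : N₀ ≤ n := le_trans hMN hn
    refine ⟨(e n hn').symm k', fun w hw => ?_⟩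
    obtain ⟨z, hz, hdz⟩ := Metric.exists_dist_lt_of_hausdorffDist_lt'
      (mem_hull hw) (hM n hn hn' k') (hull_edist_ne_top (hξn n) hξ _ _)
    have hwz : ‖pt w - z‖ ≤ 4 * η ^ 2 := by
      rw [← dist_eq_norm, dist_comm]
      exact hdz.le
    exact exists_close_vertex_dist hz hη hwz
  -- uniform gap between disjoint hulls of ξ
  have hgap : ∃ g, 0 < g ∧ ∀ pr : Fin ξ.s × Fin ξ.s, ¬ touchRel ξ pr.1 pr.2 →
      ∀ z₁ ∈ hull (ξ.leaf pr.1), ∀ z₂ ∈ hull (ξ.leaf pr.2), g ≤ dist z₁ z₂ := by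
    have per : ∀ pr ∈ (Finset.univ : Finset (Fin ξ.s × Fin ξ.s)), ∃ g, 0 < g ∧
        (¬ touchRel ξ pr.1 pr.2 →
          ∀ z₁ ∈ hull (ξ.leaf pr.1), ∀ z₂ ∈ hull (ξ.leaf pr.2), g ≤ dist z₁ z₂) := by
      intro pr _
      by_cases ht : touchRel ξ pr.1 pr.2
      · exact ⟨1, one_pos, fun hnt => absurd ht hnt⟩
      · have hdisj : Disjoint (hull (ξ.leaf pr.1)) (hull (ξ.leaf pr.2)) := by
          rw [Set.disjoint_iff_inter_eq_empty]
          exact Set.not_nonempty_iff_eq_empty.mp ht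
        obtain ⟨δ, hδ, hth⟩ := hdisj.exists_thickenings (hull_isCompact _)
          (hull_isCompact _).isClosed
        refine ⟨δ, hδ, fun _ z₁ h₁ z₂ h₂ => ?_⟩
        by_contra hlt
        push_neg at hlt
        have m1 : z₂ ∈ Metric.thickening δ (hull (ξ.leaf pr.1)) :=
          Metric.mem_thickening_iff.mpr ⟨z₁, h₁, by rw [dist_comm]; exact hlt⟩
        have m2 : z₂ ∈ Metric.thickening δ (hull (ξ.leaf pr.2)) :=
          Metric.self_subset_thickening hδ _ h₂
        exact Set.disjoint_left.mp hth m1 m2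
    obtain ⟨g, hg, hP⟩ := exists_pos_forall (Finset.univ : Finset (Fin ξ.s × Fin ξ.s))
      (fun pr g => ¬ touchRel ξ pr.1 pr.2 →
        ∀ z₁ ∈ hull (ξ.leaf pr.1), ∀ z₂ ∈ hull (ξ.leaf pr.2), g ≤ dist z₁ z₂)
      (fun pr g g' hg hgg' hP hnt z₁ h₁ z₂ h₂ => le_trans hgg' (hP hnt z₁ h₁ z₂ h₂))
      per
    exact ⟨g, hg, fun pr => hP pr (Finset.mem_univ pr)⟩
  -- eventual touching transfer and vertex approximation (direction 2)
  have evT : ∀ η : ℝ, 0 < η → ∃ M, ∀ n, M ≤ n →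
      ∃ σ : Fin (ξn n).s → Fin ξ.s,
        (∀ a b, touchRel (ξn n) a b → touchRel ξ (σ a) (σ b)) ∧
        (∀ a : Fin (ξn n).s, ∀ w' ∈ (ξn n).leaf a,
          ∃ w ∈ ξ.leaf (σ a), dist w' w ≤ η) := by
    intro η hη
    obtain ⟨g, hg, hgap'⟩ := hgap
    have hε'p : 0 < min (4 * η ^ 2) (g / 2) := lt_min (by positivity) (by positivity)
    obtain ⟨M, hMN, hM⟩ := evHD (min (4 * η ^ 2) (g / 2)) hε'p
    refine ⟨M, fun n hn => ?_⟩
    have hn' : N₀ ≤ n := le_trans hMN hn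
    refine ⟨fun a => e n hn' a, ?_, ?_⟩
    · rintro a b ⟨z, hz1, hz2⟩
      by_contra hnt
      have hda := hM n hn hn' (e n hn' a)
      have hdb := hM n hn hn' (e n hn' b)
      rw [Equiv.symm_apply_apply] at hda hdb
      obtain ⟨z₁, hz₁, hdz₁⟩ := Metric.exists_dist_lt_of_hausdorffDist_lt hz1 hda
        (hull_edist_ne_top (hξn n) hξ _ _)
      obtain ⟨z₂, hz₂, hdz₂⟩ := Metric.exists_dist_lt_of_hausdorffDist_lt hz2 hdb
        (hull_edist_ne_top (hξn n) hξ _ _)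
      have hge := hgap' (e n hn' a, e n hn' b) hnt z₁ hz₁ z₂ hz₂
      have htri : dist z₁ z₂ ≤ dist z z₁ + dist z z₂ := by
        rw [dist_comm z z₁]
        exact dist_triangle _ _ _
      have hm1 : dist z z₁ < g / 2 := lt_of_lt_of_le hdz₁ (min_le_right _ _)
      have hm2 : dist z z₂ < g / 2 := lt_of_lt_of_le hdz₂ (min_le_right _ _)
      linarith
    · intro a w' hw'
      have hda := hM n hn hn' (e n hn' a)
      rw [Equiv.symm_apply_apply] at hda
      obtain ⟨z, hz, hdz⟩ := Metric.exists_dist_lt_of_hausdorffDist_lt (mem_hull hw')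
        hda (hull_edist_ne_top (hξn n) hξ _ _)
      have hwz : ‖pt w' - z‖ ≤ 4 * η ^ 2 := by
        rw [← dist_eq_norm]
        exact le_trans hdz.le (min_le_left _ _)
      exact exists_close_vertex_dist hz hη hwz
  -- direction 1, eventually
  have dir1ev : ∀ δ : ℝ, 0 < δ → ∃ M, ∀ n, M ≤ n →
      ∀ t : Fin m.s, ∀ u ∈ m.leaf t, ∀ v ∈ m.leaf t, met (mn n) u v ≤ δ := by
    intro δ hδ
    have per_uv : ∀ t : Fin m.s, ∀ u ∈ m.leaf t, ∀ v ∈ m.leaf t,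
        ∃ M, ∀ n, M ≤ n → met (mn n) u v ≤ δ := by
      intro t u hu v hv
      rw [hcleaf] at hu hv
      obtain ⟨k, hkf, hk⟩ := Finset.mem_biUnion.mp hu
      obtain ⟨l, hlf, hl⟩ := Finset.mem_biUnion.mp hv
      have hckl : c k = c l :=
        ((Finset.mem_filter.mp hkf).2).trans ((Finset.mem_filter.mp hlf).2).symm
      have hrtg := eqvGen_to_reflTransGen (touchRel_symm ξ) ((hciff k l).mp hckl)
      obtain ⟨N, hN, hNb⟩ := dir1_chain hξ hrtg
      have hN0 : (0 : ℝ) < N := by exact_mod_cast hN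
      obtain ⟨M, hM⟩ := evQ (δ / N) (div_pos hδ hN0)
      refine ⟨M, fun n hn => ?_⟩
      have hb := hNb (ξn n) (mn n) (hmn n).2 (δ / N) (div_pos hδ hN0) (hM n hn) u hk v hl
      calc met (mn n) u v ≤ (N : ℝ) * (δ / N) := hb
        _ = δ := by field_simp
    have per_u : ∀ t : Fin m.s, ∀ u ∈ m.leaf t, ∃ M, ∀ n, M ≤ n →
        ∀ v ∈ m.leaf t, met (mn n) u v ≤ δ :=
      fun t u hu => combine_M (m.leaf t) _ (fun v hv => per_uv t u hu v hv)
    have per_t : ∀ t : Fin m.s, ∃ M, ∀ n, M ≤ n →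
        ∀ u ∈ m.leaf t, ∀ v ∈ m.leaf t, met (mn n) u v ≤ δ :=
      fun t => combine_M (m.leaf t) _ (fun u hu => per_u t u hu)
    obtain ⟨M, hM⟩ := combine_M (Finset.univ : Finset (Fin m.s)) _ (fun t _ => per_t t)
    exact ⟨M, fun n hn t => hM n hn t (Finset.mem_univ t)⟩
  -- direction 2, eventually
  have dir2ev : ∀ δ : ℝ, 0 < δ → ∃ M, ∀ n, M ≤ n →
      ∀ t' : Fin (mn n).s, ∀ u' ∈ (mn n).leaf t', ∀ v' ∈ (mn n).leaf t',
        met m u' v' ≤ δ := by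
    intro δ hδ
    obtain ⟨M, hM⟩ := evT (δ / 2) (by positivity)
    refine ⟨M, fun n hn t' u' hu' v' hv' => ?_⟩
    obtain ⟨σ, htr, happ⟩ := hM n hn
    calc met m u' v' ≤ 2 * (δ / 2) :=
          dir2_bound hm.2 (hmn n).2 σ htr happ t' u' hu' v' hv'
      _ = δ := by ring
  -- the key uniform estimate
  have key : ∀ ε' : ℝ, 0 < ε' → ∃ M, ∀ n, M ≤ n → ∀ x y : Circ,
      |met (mn n) x y - met m x y| ≤ ε' := by
    intro ε' hε'
    have hδ₁p : 0 < ε' / (2 * ((m.s : ℝ) + 1)) := by positivity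
    have hdpos : (0 : ℝ) < d := by
      have : 0 < d := by omega
      exact_mod_cast this
    have hδ₂p : 0 < ε' / (2 * (d : ℝ)) := by positivity
    obtain ⟨M₁, hM₁⟩ := dir1ev _ hδ₁p
    obtain ⟨M₂, hM₂⟩ := dir2ev _ hδ₂p
    refine ⟨max M₁ M₂, fun n hn x y => ?_⟩
    have hA := met_close hδ₁p.le (hM₁ n (le_trans (le_max_left _ _) hn)) x y
    have hB := met_close hδ₂p.le (hM₂ n (le_trans (le_max_right _ _) hn)) x y
    have hs1 : (m.s : ℝ) * (ε' / (2 * ((m.s : ℝ) + 1))) ≤ ε' / 2 := by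
      have he : (m.s : ℝ) * (ε' / (2 * ((m.s : ℝ) + 1)))
          = (m.s : ℝ) * ε' / (2 * ((m.s : ℝ) + 1)) := by ring
      rw [he, div_le_div_iff₀ (by positivity) (by norm_num : (0:ℝ) < 2)]
      have h0 : (0 : ℝ) ≤ (m.s : ℝ) := Nat.cast_nonneg _
      nlinarith [hε'.le]
    have hs2 : ((mn n).s : ℝ) * (ε' / (2 * (d : ℝ))) ≤ ε' / 2 := by
      have hsle : ((mn n).s : ℝ) ≤ (d : ℝ) := by
        have h1 : (mn n).s ≤ d - 1 := portrait_s_le (hmn n).1.1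
        have h2 : (mn n).s ≤ d := by omega
        exact_mod_cast h2
      have he : ((mn n).s : ℝ) * (ε' / (2 * (d : ℝ)))
          = ((mn n).s : ℝ) * ε' / (2 * (d : ℝ)) := by ring
      rw [he, div_le_div_iff₀ (by positivity) (by norm_num : (0:ℝ) < 2)]
      nlinarith [hε'.le, Nat.cast_nonneg (α := ℝ) (mn n).s]
    rw [abs_sub_le_iff]
    constructor <;> linarith
  -- conclusion
  rw [Metric.tendsto_atTop]
  intro ε hε
  obtain ⟨M, hM⟩ := key (ε / 2) (half_pos hε)
  refine ⟨M, fun n hn => ?_⟩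
  have h1 : md (mn n) m ≤ ε / 2 := md_le (hM n hn)
  have h0 := md_nonneg (mn n) m
  rw [Real.dist_eq, sub_zero, abs_of_nonneg h0]
  linarith

end CoreEntropy
end
end

section
/- Let Γ be the graph associated to a labeled wedge of size s. Then every vertex lying on a closed path of length n in Γ has height at most n, and every vertex lying on a closed path of length n in Γ has width at most 2n. -/
/-!
Common definitions for the formalization of
"Core entropy of polynomials of arbitrary degree" (Gao–Tiozzo).
-/

open Set Metric Filter Topology

attribute [local instance] Classical.propDecidable

noncomputable section

namespace CoreEntropy

section Aux

variable {s : ℕ}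

/-- `t` occurs as an index in the vertex `v`. -/
def HasIdxN (v : Vtx s) (t : ℕ) : Prop := ∃ a ∈ v, (a.2 : ℕ) = t

lemma ordRep_mk (a b : Sym s) : ordRep (Sym2.mk a b) = pick a b := rfl

lemma mk_pick (a b : Sym s) : Sym2.mk (pick a b).1 (pick a b).2 = Sym2.mk a b := by
  unfold pick; split_ifs <;> simp [Sym2.eq_swap]

lemma mk_ordRep (v : Vtx s) : Sym2.mk (ordRep v).1 (ordRep v).2 = v := by
  induction v using Sym2.inductionOn with
  | hf a b => rw [ordRep_mk]; exact mk_pick a b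

lemma hasIdxN_mk {a b : Sym s} {t : ℕ} :
    HasIdxN (Sym2.mk a b) t ↔ (a.2 : ℕ) = t ∨ (b.2 : ℕ) = t := by
  constructor
  · rintro ⟨c, hc, rfl⟩
    rcases Sym2.mem_iff.mp hc with rfl | rfl
    · exact Or.inl rfl
    · exact Or.inr rfl
  · rintro (h | h)
    · exact ⟨a, Sym2.mem_mk_left a b, h⟩
    · exact ⟨b, Sym2.mem_mk_right a b, h⟩

lemma vheight_mk (a b : Sym s) :
    vheight (Sym2.mk a b) = min (a.2 : ℕ) (b.2 : ℕ) := by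
  unfold vheight
  rw [ordRep_mk]
  unfold pick
  split_ifs <;> dsimp only <;> omega

lemma vwidth_mk (a b : Sym s) :
    vwidth (Sym2.mk a b) = max (a.2 : ℕ) (b.2 : ℕ) := by
  unfold vwidth
  rw [ordRep_mk]
  unfold pick
  split_ifs <;> dsimp only <;> omega

lemma vheight_le_of_hasIdxN {v : Vtx s} {t : ℕ} (h : HasIdxN v t) : vheight v ≤ t := by
  induction v using Sym2.inductionOn with
  | hf a b =>
    rcases hasIdxN_mk.mp h with h | h <;> rw [vheight_mk] <;> omega

lemma hasIdxN_eq {v : Vtx s} {t : ℕ} (h : HasIdxN v t) :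
    t = vheight v ∨ t = vwidth v := by
  induction v using Sym2.inductionOn with
  | hf a b =>
    rcases hasIdxN_mk.mp h with h | h <;> rw [vheight_mk, vwidth_mk] <;> omega

lemma hasIdxN_vwidth (v : Vtx s) : HasIdxN v (vwidth v) := by
  induction v using Sym2.inductionOn with
  | hf a b =>
    rw [vwidth_mk]
    rcases le_total (a.2 : ℕ) (b.2 : ℕ) with h | h
    · exact hasIdxN_mk.mpr (Or.inr (by omega))
    · exact hasIdxN_mk.mpr (Or.inl (by omega))

lemma hasIdxN_of_mem_centrals {L : List (Fin s)} {v : Vtx s} (hv : v ∈ centrals L)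
    {t : ℕ} (ht : HasIdxN v t) : t = 1 := by
  unfold centrals at hv
  rw [List.mem_map] at hv
  obtain ⟨q, -, rfl⟩ := hv
  rcases hasIdxN_mk.mp ht with h | h <;> simpa using h.symm

lemma succSym_coe (a : Sym s) : ((succSym a).2 : ℕ) = (a.2 : ℕ) + 1 := by
  simp [succSym]

lemma step_hasIdxN {W : LabeledWedge s} {a b : Sym s} {v : Vtx s}
    (hv : v ∈ targets W a b) {t : ℕ} (ht : 2 ≤ t) (h : HasIdxN v t) :
    HasIdxN (Sym2.mk a b) (t - 1) := by
  unfold targets at hv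
  split_ifs at hv with hl
  · simp only [List.mem_singleton, List.mem_nil_iff, or_false] at hv
    subst hv
    rcases hasIdxN_mk.mp h with h | h
    · exact hasIdxN_mk.mpr (Or.inl (by rw [succSym_coe] at h; omega))
    · exact hasIdxN_mk.mpr (Or.inr (by rw [succSym_coe] at h; omega))
  · simp only [List.cons_append, List.mem_cons, List.mem_append,
      List.mem_singleton, List.mem_nil_iff, or_false] at hv
    rcases hv with rfl | hv | rfl
    · rcases hasIdxN_mk.mp h with h | h
      · exact hasIdxN_mk.mpr (Or.inl (by rw [succSym_coe] at h; omega))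
      · simp at h; omega
    · have := hasIdxN_of_mem_centrals hv h; omega
    · rcases hasIdxN_mk.mp h with h | h
      · simp at h; omega
      · exact hasIdxN_mk.mpr (Or.inr (by rw [succSym_coe] at h; omega))

lemma step_height {W : LabeledWedge s} {a b : Sym s} {v : Vtx s}
    (hv : v ∈ targets W a b) (h2 : 2 ≤ vheight v) :
    v = Sym2.mk (succSym a) (succSym b) := by
  unfold targets at hv
  split_ifs at hv with hl
  · simpa using hv
  · exfalso
    have h1 : HasIdxN v 1 := by
      simp only [List.cons_append, List.mem_cons, List.mem_append,
        List.mem_singleton, List.mem_nil_iff, or_false] at hv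
      rcases hv with rfl | hv | rfl
      · exact hasIdxN_mk.mpr (Or.inr (by simp))
      · unfold centrals at hv
        rw [List.mem_map] at hv
        obtain ⟨q, -, rfl⟩ := hv
        exact hasIdxN_mk.mpr (Or.inl (by simp))
      · exact hasIdxN_mk.mpr (Or.inl (by simp))
    have := vheight_le_of_hasIdxN h1
    omega

lemma vheight_succ (a b : Sym s) :
    vheight (Sym2.mk (succSym a) (succSym b)) = vheight (Sym2.mk a b) + 1 := by
  rw [vheight_mk, vheight_mk, succSym_coe, succSym_coe]
  omega

lemma mem_targets_of_edge {W : LabeledWedge s} {u v : Vtx s}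
    (h : 0 < numEdges W u v) : v ∈ targets W (ordRep u).1 (ordRep u).2 := by
  unfold numEdges at h
  exact List.count_pos_iff.mp h

lemma edge_hasIdxN {W : LabeledWedge s} {u v : Vtx s} (h : 0 < numEdges W u v)
    {t : ℕ} (ht : 2 ≤ t) (hi : HasIdxN v t) : HasIdxN u (t - 1) := by
  have h2 := step_hasIdxN (mem_targets_of_edge h) ht hi
  rwa [mk_ordRep] at h2

lemma edge_height {W : LabeledWedge s} {u v : Vtx s} (h : 0 < numEdges W u v)
    (h2 : 2 ≤ vheight v) : vheight v = vheight u + 1 := by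
  have hv := step_height (mem_targets_of_edge h) h2
  rw [hv, vheight_succ, mk_ordRep]

lemma cyc_eq {n : ℕ} [NeZero n] (j : Fin n) : cyc j = j + 1 := by
  ext
  simp only [cyc, Fin.add_def, Fin.val_one']
  conv_lhs => rw [Nat.add_mod, Nat.mod_eq_of_lt j.isLt]

end Aux

open Fin.CommRing

/-- Let `Γ` be the graph associated to a labeled wedge of size `s`.  Then
every vertex lying on a closed path of length `n` in `Γ` has height at most `n`, and every
vertex lying on a closed path of length `n` in `Γ` has width at most `2n`. -/
theorem closed_path_height_width (s : ℕ) (hs : 1 ≤ s) (W : LabeledWedge s) (n : ℕ)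
    (p : ClosedPaths (wedgeGraph W) n) (i : Fin n) :
    vheight (p.1 i) ≤ n ∧ vwidth (p.1 i) ≤ 2 * n := by
  haveI : NeZero n := ⟨i.pos.ne'⟩
  have hn1 : 1 ≤ n := i.pos
  have hedge : ∀ j : Fin n, 0 < numEdges W (p.1 j) (p.1 (j + 1)) := by
    intro j
    have h := (p.2 j).pos
    rwa [cyc_eq] at h
  have track : ∀ m : ℕ, ∀ j : Fin n, ∀ t : ℕ, m < t → HasIdxN (p.1 j) t →
      HasIdxN (p.1 (j - (m : Fin n))) (t - m) := by
    intro m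
    induction m with
    | zero => intro j t _ h; simpa using h
    | succ m ih =>
      intro j t hm h
      have h1 := ih j t (by omega) h
      have hedge' := hedge (j - (m : Fin n) - 1)
      rw [sub_add_cancel] at hedge'
      have h2 := edge_hasIdxN hedge' (t := t - m) (by omega) h1
      have hc : ((m + 1 : ℕ) : Fin n) = (m : Fin n) + 1 := by push_cast; ring
      rw [hc, show j - ((m : Fin n) + 1) = j - (m : Fin n) - 1 from by ring]
      have : t - (m + 1) = t - m - 1 := by omega
      rwa [this]
  have htrack : ∀ m : ℕ, ∀ j : Fin n, m + 1 ≤ vheight (p.1 j) →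
      vheight (p.1 (j - (m : Fin n))) = vheight (p.1 j) - m := by
    intro m
    induction m with
    | zero => intro j _; simpa using rfl
    | succ m ih =>
      intro j hm
      have h1 := ih j (by omega)
      have hedge' := hedge (j - (m : Fin n) - 1)
      rw [sub_add_cancel] at hedge'
      have h2 := edge_height hedge' (by omega)
      have hc : ((m + 1 : ℕ) : Fin n) = (m : Fin n) + 1 := by push_cast; ring
      rw [hc, show j - ((m : Fin n) + 1) = j - (m : Fin n) - 1 from by ring]
      omega
  have hheight : vheight (p.1 i) ≤ n := by
    by_contra hcon
    push_neg at hcon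
    have h := htrack n i (by omega)
    rw [Fin.natCast_self, sub_zero] at h
    omega
  refine ⟨hheight, ?_⟩
  by_cases hw : vwidth (p.1 i) ≤ n
  · omega
  push_neg at hw
  have h1 := track n i (vwidth (p.1 i)) (by omega) (hasIdxN_vwidth _)
  rw [Fin.natCast_self, sub_zero] at h1
  rcases hasIdxN_eq h1 with h | h <;> omega

end CoreEntropy
end
end
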